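/- For every state σ of the one-dimensional rotor-router model with interval [x, y], there exists N ∈ ℕ such that f_{r,s}^N(σ) has interval [x′, y′] with x′ < x and y′ > y. -/

import Mathlib

/-- One step of the one-dimensional rotor walk: a particle at site `t` moves right if the
label there is `R` (`true`) and left if it is `L` (`false`), and the label at `t` is flipped. -/
def walkStep : ℤ × (ℤ → Bool) → ℤ × (ℤ → Bool)
  | (t, ℓ) => ((if ℓ t then t + 1 else t - 1), Function.update ℓ t (!ℓ t))

lemma sweepR : ∀ (k : ℕ) (p : ℤ) (ℓ : ℤ → Bool),
    (∀ t, p ≤ t → t < p + k → ℓ t = true) →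
    walkStep^[k] (p, ℓ) = (p + k, fun t => if p ≤ t ∧ t < p + k then false else ℓ t) := by
  intro k
  induction k with
  | zero =>
    intro p ℓ _
    simp only [Function.iterate_zero, id, Nat.cast_zero, add_zero]
    refine Prod.ext rfl ?_
    funext t
    simp only
    split_ifs with h
    · omega
    · rfl
  | succ k ih =>
    intro p ℓ h
    have hp : ℓ p = true := h p le_rfl (by push_cast; omega)
    have h1 : walkStep (p, ℓ) = (p + 1, Function.update ℓ p false) := by
      simp [walkStep, hp]
    rw [Function.iterate_succ_apply, h1,
      ih (p+1) _ (fun t ht1 ht2 => by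
        have htp : t ≠ p := by omega
        simp [Function.update, htp]
        exact h t (by omega) (by push_cast at ht2 ⊢; omega))]
    refine Prod.ext (by push_cast; ring) ?_
    funext t
    dsimp only
    by_cases htp : t = p
    · subst htp
      rw [if_neg (by push_cast; omega), if_pos (by push_cast; omega), Function.update_self]
    · simp only [Function.update, htp, if_neg, dif_neg, Ne, not_false_iff]
      push_cast
      split_ifs <;> first | rfl | omega

lemma sweepL : ∀ (k : ℕ) (p : ℤ) (ℓ : ℤ → Bool),
    (∀ t, p - k < t → t ≤ p → ℓ t = false) →
    walkStep^[k] (p, ℓ) = (p - k, fun t => if p - k < t ∧ t ≤ p then true else ℓ t) := by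
  intro k
  induction k with
  | zero =>
    intro p ℓ _
    simp only [Function.iterate_zero, id, Nat.cast_zero, sub_zero]
    refine Prod.ext rfl ?_
    funext t
    dsimp only
    split_ifs with h
    · omega
    · rfl
  | succ k ih =>
    intro p ℓ h
    have hp : ℓ p = false := h p (by push_cast; omega) le_rfl
    have h1 : walkStep (p, ℓ) = (p - 1, Function.update ℓ p true) := by
      simp [walkStep, hp]
    rw [Function.iterate_succ_apply, h1,
      ih (p-1) _ (fun t ht1 ht2 => by
        have htp : t ≠ p := by omega
        simp only [Function.update, htp, dif_neg, Ne, not_false_iff]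
        exact h t (by push_cast at ht1 ⊢; omega) (by omega))]
    refine Prod.ext (by push_cast; ring) ?_
    funext t
    dsimp only
    by_cases htp : t = p
    · subst htp
      rw [if_neg (by omega), if_pos (by push_cast; omega), Function.update_self]
    · simp only [Function.update, htp, if_neg, dif_neg, Ne, not_false_iff]
      split_ifs <;> first | rfl | (push_cast at *; omega)
noncomputable def cardF (ℓ : ℤ → Bool) (a b : ℤ) : ℕ :=
  ((Finset.Icc a b).filter (fun t => ℓ t = false)).card

noncomputable def cardT (ℓ : ℤ → Bool) (a b : ℤ) : ℕ :=
  ((Finset.Icc a b).filter (fun t => ℓ t = true)).card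

lemma allTrue_of_cardF {ℓ : ℤ → Bool} {p y : ℤ} (h : cardF ℓ p y = 0) :
    ∀ t, p ≤ t → t ≤ y → ℓ t = true := by
  intro t h1 h2
  by_contra hf
  have hf' : ℓ t = false := by simpa using hf
  have : t ∈ (Finset.Icc p y).filter (fun t => ℓ t = false) :=
    Finset.mem_filter.2 ⟨Finset.mem_Icc.2 ⟨h1, h2⟩, hf'⟩
  rw [Finset.card_eq_zero.1 h] at this
  exact absurd this (Finset.notMem_empty t)

lemma exists_min_false {ℓ : ℤ → Bool} {p y : ℤ} (h : cardF ℓ p y ≠ 0) :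
    ∃ a, p ≤ a ∧ a ≤ y ∧ ℓ a = false ∧ ∀ t, p ≤ t → t < a → ℓ t = true := by
  set S := (Finset.Icc p y).filter (fun t => ℓ t = false) with hS
  have hne : S.Nonempty := Finset.card_pos.1 (Nat.pos_of_ne_zero h)
  have hmem := Finset.mem_Icc.1 (Finset.mem_of_mem_filter _ (S.min'_mem hne))
  have hmem2 : ℓ (S.min' hne) = false := (Finset.mem_filter.1 (S.min'_mem hne)).2
  refine ⟨S.min' hne, hmem.1, hmem.2, hmem2, ?_⟩
  intro t ht1 ht2
  by_contra hf
  have hf' : ℓ t = false := by simpa using hf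
  have : t ∈ S := Finset.mem_filter.2 ⟨Finset.mem_Icc.2 ⟨ht1, by omega⟩, hf'⟩
  have := S.min'_le t this
  omega

lemma allFalse_of_cardT {ℓ : ℤ → Bool} {x q : ℤ} (h : cardT ℓ x q = 0) :
    ∀ t, x ≤ t → t ≤ q → ℓ t = false := by
  intro t h1 h2
  by_contra hf
  have hf' : ℓ t = true := by simpa using hf
  have : t ∈ (Finset.Icc x q).filter (fun t => ℓ t = true) :=
    Finset.mem_filter.2 ⟨Finset.mem_Icc.2 ⟨h1, h2⟩, hf'⟩
  rw [Finset.card_eq_zero.1 h] at this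
  exact absurd this (Finset.notMem_empty t)

lemma exists_max_true {ℓ : ℤ → Bool} {x q : ℤ} (h : cardT ℓ x q ≠ 0) :
    ∃ b, x ≤ b ∧ b ≤ q ∧ ℓ b = true ∧ ∀ t, b < t → t ≤ q → ℓ t = false := by
  set S := (Finset.Icc x q).filter (fun t => ℓ t = true) with hS
  have hne : S.Nonempty := Finset.card_pos.1 (Nat.pos_of_ne_zero h)
  have hmem := Finset.mem_Icc.1 (Finset.mem_of_mem_filter _ (S.max'_mem hne))
  have hmem2 : ℓ (S.max' hne) = true := (Finset.mem_filter.1 (S.max'_mem hne)).2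
  refine ⟨S.max' hne, hmem.1, hmem.2, hmem2, ?_⟩
  intro t ht1 ht2
  by_contra hf
  have hf' : ℓ t = true := by simpa using hf
  have : t ∈ S := Finset.mem_filter.2 ⟨Finset.mem_Icc.2 ⟨by omega, ht2⟩, hf'⟩
  have := S.le_max' t this
  omega

lemma count_zig_F {ℓ : ℤ → Bool} {b p a y : ℤ} (hb : ℓ b = true)
    (hmin : ∀ t, p ≤ t → t < a → ℓ t = true) (ha : ℓ a = false)
    (h1 : b < p) (h2 : p ≤ a) (h3 : a ≤ y) :
    cardF (fun t => if b < t ∧ t ≤ a then true else ℓ t) b y + 1 = cardF ℓ p y := by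
  have e1 : (Finset.Icc b y).filter (fun t => (if b < t ∧ t ≤ a then true else ℓ t) = false)
      = (Finset.Icc (a+1) y).filter (fun t => ℓ t = false) := by
    ext t
    simp only [Finset.mem_filter, Finset.mem_Icc]
    by_cases hc : b < t ∧ t ≤ a
    · simp only [if_pos hc]
      constructor
      · rintro ⟨-, h⟩; exact absurd h (by simp)
      · rintro ⟨h, -⟩; omega
    · simp only [if_neg hc]
      constructor
      · rintro ⟨⟨hbt, hty⟩, hf⟩
        refine ⟨⟨?_, hty⟩, hf⟩
        rcases lt_or_ge t p with h | h
        · by_cases htb : t = b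
          · subst htb; rw [hb] at hf; exact absurd hf (by simp)
          · omega
        · have := hmin t h
          by_contra hcon
          have : ℓ t = true := hmin t h (by omega)
          rw [this] at hf; exact absurd hf (by simp)
      · rintro ⟨⟨hat, hty⟩, hf⟩
        exact ⟨⟨by omega, hty⟩, hf⟩
  have e2 : (Finset.Icc p y).filter (fun t => ℓ t = false)
      = insert a ((Finset.Icc (a+1) y).filter (fun t => ℓ t = false)) := by
    ext t
    simp only [Finset.mem_filter, Finset.mem_Icc, Finset.mem_insert]
    constructor
    · rintro ⟨⟨hpt, hty⟩, hf⟩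
      by_cases hta : t = a
      · exact Or.inl hta
      · refine Or.inr ⟨⟨?_, hty⟩, hf⟩
        by_contra hcon
        have : ℓ t = true := hmin t hpt (by omega)
        rw [this] at hf; exact absurd hf (by simp)
    · rintro (rfl | ⟨⟨hat, hty⟩, hf⟩)
      · exact ⟨⟨h2, h3⟩, ha⟩
      · exact ⟨⟨by omega, hty⟩, hf⟩
  have hnot : a ∉ (Finset.Icc (a+1) y).filter (fun t => ℓ t = false) := by
    simp only [Finset.mem_filter, Finset.mem_Icc]
    rintro ⟨⟨h, -⟩, -⟩; omega
  unfold cardF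
  rw [e1, e2, Finset.card_insert_of_notMem hnot]

lemma count_zig_T {ℓ : ℤ → Bool} {x b q a : ℤ}
    (hmax : ∀ t, b < t → t ≤ q → ℓ t = false) (hb : ℓ b = true)
    (hxb : x ≤ b) (hbq : b ≤ q) :
    cardT (fun t => if b < t ∧ t ≤ a then true else ℓ t) x (b-1) + 1 = cardT ℓ x q := by
  have e1 : (Finset.Icc x (b-1)).filter (fun t => (if b < t ∧ t ≤ a then true else ℓ t) = true)
      = (Finset.Icc x (b-1)).filter (fun t => ℓ t = true) := by
    apply Finset.filter_congr
    intro t ht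
    rw [Finset.mem_Icc] at ht
    rw [if_neg (by omega)]
  have e2 : (Finset.Icc x q).filter (fun t => ℓ t = true)
      = insert b ((Finset.Icc x (b-1)).filter (fun t => ℓ t = true)) := by
    ext t
    simp only [Finset.mem_filter, Finset.mem_Icc, Finset.mem_insert]
    constructor
    · rintro ⟨⟨hxt, htq⟩, hf⟩
      by_cases htb : t = b
      · exact Or.inl htb
      · refine Or.inr ⟨⟨hxt, ?_⟩, hf⟩
        by_contra hcon
        have : ℓ t = false := hmax t (by omega) htq
        rw [this] at hf; exact absurd hf (by simp)
    · rintro (rfl | ⟨⟨hxt, htb⟩, hf⟩)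
      · exact ⟨⟨hxb, hbq⟩, hb⟩
      · exact ⟨⟨hxt, by omega⟩, hf⟩
  have hnot : b ∉ (Finset.Icc x (b-1)).filter (fun t => ℓ t = true) := by
    simp only [Finset.mem_filter, Finset.mem_Icc]
    rintro ⟨⟨-, h⟩, -⟩; omega
  unfold cardT
  rw [e1, e2, Finset.card_insert_of_notMem hnot]

lemma segPos (P : ℤ → Prop) (n₁ n₂ : ℕ) (c c' : ℤ × (ℤ → Bool)) (hcc : walkStep^[n₁] c = c')
    (h1 : ∀ k, k < n₁ → P (walkStep^[k] c).1) (h2 : ∀ k, k < n₂ → P (walkStep^[k] c').1) :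
    ∀ k, k < n₂ + n₁ → P (walkStep^[k] c).1 := by
  intro k hk
  rcases lt_or_ge k n₁ with h | h
  · exact h1 k h
  · have hkk : k = (k - n₁) + n₁ := by omega
    rw [hkk, Function.iterate_add_apply, hcc]
    exact h2 _ (by omega)

lemma sweepR_pos (k : ℕ) (p : ℤ) (ℓ : ℤ → Bool)
    (h : ∀ t, p ≤ t → t < p + k → ℓ t = true) :
    ∀ j, j ≤ k → (walkStep^[j] (p, ℓ)).1 = p + j := by
  intro j hj
  rw [sweepR j p ℓ (fun t ht1 ht2 => h t ht1 (by
    have : (j:ℤ) ≤ k := by exact_mod_cast hj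
    omega))]

lemma sweepL_pos (k : ℕ) (p : ℤ) (ℓ : ℤ → Bool)
    (h : ∀ t, p - k < t → t ≤ p → ℓ t = false) :
    ∀ j, j ≤ k → (walkStep^[j] (p, ℓ)).1 = p - j := by
  intro j hj
  rw [sweepL j p ℓ (fun t ht1 ht2 => h t (by
    have : (j:ℤ) ≤ k := by exact_mod_cast hj
    omega) ht2)]

lemma runLemma : ∀ (A : ℕ) (x p y : ℤ) (ℓ : ℤ → Bool), x ≤ p → p ≤ y →
    cardF ℓ p y = A →
    (A ≤ cardT ℓ x (p-1) →
      ∃ n m, x ≤ m ∧ m ≤ p ∧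
        walkStep^[n] (p, ℓ) = (y+1, fun t => if m ≤ t ∧ t ≤ y then false else ℓ t) ∧
        ∀ k, k < n → x ≤ (walkStep^[k] (p,ℓ)).1 ∧ (walkStep^[k] (p,ℓ)).1 ≤ y) ∧
    (cardT ℓ x (p-1) < A →
      ∃ n a, p ≤ a ∧ a ≤ y ∧ ℓ a = false ∧
        walkStep^[n] (p, ℓ) = (x-1, fun t => if x ≤ t ∧ t ≤ a then true else ℓ t) ∧
        ∀ k, k < n → x ≤ (walkStep^[k] (p,ℓ)).1 ∧ (walkStep^[k] (p,ℓ)).1 ≤ y) := by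
  intro A
  induction A with
  | zero =>
    intro x p y ℓ hxp hpy hF
    constructor
    · intro _
      have hall := allTrue_of_cardF hF
      set n : ℕ := (y + 1 - p).toNat with hn
      have hn' : p + (n:ℤ) = y + 1 := by rw [hn]; omega
      refine ⟨n, p, hxp, le_rfl, ?_, ?_⟩
      · rw [sweepR n p ℓ (fun t ht1 ht2 => hall t ht1 (by omega))]
        rw [hn']
        refine Prod.ext rfl ?_
        funext t
        dsimp only
        split_ifs with h1 h2 h2 <;> first | rfl | omega
      · intro k hk
        have hk' : (k:ℤ) < n := by exact_mod_cast hk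
        rw [sweepR_pos n p ℓ (fun t ht1 ht2 => hall t ht1 (by omega)) k (le_of_lt hk)]
        omega
    · intro h
      exact absurd h (by omega)
  | succ A ih =>
    intro x p y ℓ hxp hpy hF
    obtain ⟨a, hpa, hay, ha, hamin⟩ := exists_min_false (by rw [hF]; exact Nat.succ_ne_zero A)
    -- first sweep right from p to a
    set n₁ : ℕ := (a - p).toNat with hn₁
    have hn₁' : p + (n₁:ℤ) = a := by rw [hn₁]; omega
    set ℓ₁ : ℤ → Bool := fun t => if p ≤ t ∧ t < a then false else ℓ t with hℓ₁
    have hs₁ : walkStep^[n₁] (p, ℓ) = (a, ℓ₁) := by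
      rw [sweepR n₁ p ℓ (fun t ht1 ht2 => hamin t ht1 (by omega)), hn₁']
    have hs₁pos : ∀ k, k < n₁ → x ≤ (walkStep^[k] (p,ℓ)).1 ∧ (walkStep^[k] (p,ℓ)).1 ≤ y := by
      intro k hk
      have hk' : (k:ℤ) < n₁ := by exact_mod_cast hk
      rw [sweepR_pos n₁ p ℓ (fun t ht1 ht2 => hamin t ht1 (by omega)) k (le_of_lt hk)]
      omega
    have hℓ₁false : ∀ t, p ≤ t → t ≤ a → ℓ₁ t = false := by
      intro t ht1 ht2
      rw [hℓ₁]
      dsimp only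
      rcases eq_or_lt_of_le ht2 with rfl | h
      · rw [if_neg (by omega), ha]
      · rw [if_pos ⟨ht1, h⟩]
    rcases Nat.eq_zero_or_pos (cardT ℓ x (p-1)) with hB | hB
    · -- no right-pointing rotor to the left: exit left
      constructor
      · intro h
        exact absurd h (by omega)
      · intro _
        have hallF := allFalse_of_cardT hB
        have hℓ₁false' : ∀ t, a - ((a - x + 1).toNat : ℤ) < t → t ≤ a → ℓ₁ t = false := by
          intro t ht1 ht2
          rcases lt_or_ge t p with h | h
          · rw [hℓ₁]; dsimp only
            rw [if_neg (by omega)]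
            exact hallF t (by omega) (by omega)
          · exact hℓ₁false t h ht2
        set n₂ : ℕ := (a - x + 1).toNat with hn₂
        have hn₂' : a - (n₂:ℤ) = x - 1 := by rw [hn₂]; omega
        have hs₂ : walkStep^[n₂] (a, ℓ₁) =
            (x - 1, fun t => if x ≤ t ∧ t ≤ a then true else ℓ t) := by
          rw [sweepL n₂ a ℓ₁ hℓ₁false', hn₂']
          refine Prod.ext rfl ?_
          funext t
          dsimp only
          rw [hℓ₁]
          dsimp only
          split_ifs <;> first | rfl | omega
        refine ⟨n₂ + n₁, a, hpa, hay, ha, ?_, ?_⟩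
        · rw [Function.iterate_add_apply, hs₁, hs₂]
        · refine segPos (fun z => x ≤ z ∧ z ≤ y) n₁ n₂ _ _ hs₁ hs₁pos ?_
          intro k hk
          have hk' : (k:ℤ) < n₂ := by exact_mod_cast hk
          rw [sweepL_pos n₂ a ℓ₁ hℓ₁false' k (le_of_lt hk)]
          omega
    · -- there is a right-pointing rotor at b < p: zigzag and recurse
      obtain ⟨b, hxb, hbp, hb, hbmax⟩ := exists_max_true (by omega : cardT ℓ x (p-1) ≠ 0)
      set n₂ : ℕ := (a - b).toNat with hn₂
      have hn₂' : a - (n₂:ℤ) = b := by rw [hn₂]; omega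
      set ℓ₂ : ℤ → Bool := fun t => if b < t ∧ t ≤ a then true else ℓ t with hℓ₂
      have hℓ₁false' : ∀ t, a - (n₂:ℤ) < t → t ≤ a → ℓ₁ t = false := by
        intro t ht1 ht2
        rcases lt_or_ge t p with h | h
        · rw [hℓ₁]; dsimp only
          rw [if_neg (by omega)]
          exact hbmax t (by omega) (by omega)
        · exact hℓ₁false t h ht2
      have hs₂ : walkStep^[n₂] (a, ℓ₁) = (b, ℓ₂) := by
        rw [sweepL n₂ a ℓ₁ hℓ₁false', hn₂']
        refine Prod.ext rfl ?_
        funext t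
        rw [hℓ₂, hℓ₁]
        dsimp only
        split_ifs <;> first | rfl | omega
      have hs₂pos : ∀ k, k < n₂ → x ≤ (walkStep^[k] (a, ℓ₁)).1 ∧ (walkStep^[k] (a, ℓ₁)).1 ≤ y := by
        intro k hk
        have hk' : (k:ℤ) < n₂ := by exact_mod_cast hk
        rw [sweepL_pos n₂ a ℓ₁ hℓ₁false' k (le_of_lt hk)]
        omega
      have hs₁₂ : walkStep^[n₂ + n₁] (p, ℓ) = (b, ℓ₂) := by
        rw [Function.iterate_add_apply, hs₁, hs₂]
      have hpos₁₂ : ∀ k, k < n₂ + n₁ →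
          x ≤ (walkStep^[k] (p,ℓ)).1 ∧ (walkStep^[k] (p,ℓ)).1 ≤ y :=
        segPos (fun z => x ≤ z ∧ z ≤ y) n₁ n₂ _ _ hs₁ hs₁pos hs₂pos
      have hF₂ : cardF ℓ₂ b y = A := by
        have h2 := count_zig_F hb hamin ha (by omega) hpa hay
        rw [hF] at h2
        rw [hℓ₂]
        omega
      have hT₂ : cardT ℓ₂ x (b-1) + 1 = cardT ℓ x (p-1) := by
        rw [hℓ₂]
        exact count_zig_T hbmax hb hxb hbp
      have hℓ₂eq : ∀ t, t < b ∨ a < t → ℓ₂ t = ℓ t := by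
        intro t ht
        rw [hℓ₂]; dsimp only
        rw [if_neg (by omega)]
      obtain ⟨ihR, ihL⟩ := ih x b y ℓ₂ hxb (by omega) hF₂
      constructor
      · intro hc
        obtain ⟨n₃, m, hxm, hmb, heq, hpos⟩ := ihR (by omega)
        refine ⟨n₃ + (n₂ + n₁), m, hxm, by omega, ?_, ?_⟩
        · rw [Function.iterate_add_apply, hs₁₂, heq]
          refine Prod.ext rfl ?_
          funext t
          dsimp only
          by_cases hin : m ≤ t ∧ t ≤ y
          · rw [if_pos hin, if_pos hin]
          · rw [if_neg hin, if_neg hin, hℓ₂eq t (by omega)]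
        · refine segPos (fun z => x ≤ z ∧ z ≤ y) (n₂ + n₁) n₃ _ _ hs₁₂ hpos₁₂ hpos
      · intro hc
        obtain ⟨n₃, a₂, hba₂, ha₂y, ha₂, heq, hpos⟩ := ihL (by omega)
        have ha₂a : a < a₂ := by
          by_contra hcon
          have h1 : ℓ₂ a₂ = true := by
            rw [hℓ₂]; dsimp only
            rcases eq_or_lt_of_le hba₂ with rfl | h
            · rw [if_neg (by omega)]; exact hb
            · rw [if_pos ⟨h, by omega⟩]
          rw [h1] at ha₂
          exact absurd ha₂ (by simp)
        refine ⟨n₃ + (n₂ + n₁), a₂, by omega, ha₂y, by rw [← hℓ₂eq a₂ (by omega)]; exact ha₂, ?_, ?_⟩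
        · rw [Function.iterate_add_apply, hs₁₂, heq]
          refine Prod.ext rfl ?_
          funext t
          dsimp only
          by_cases hin : x ≤ t ∧ t ≤ a₂
          · rw [if_pos hin, if_pos hin]
          · rw [if_neg hin, if_neg hin, hℓ₂eq t (by omega)]
        · refine segPos (fun z => x ≤ z ∧ z ≤ y) (n₂ + n₁) n₃ _ _ hs₁₂ hpos₁₂ hpos

/-- A state of the one-dimensional rotor-router model: the occupied interval `[x, y]`
(with `x ≤ 0 ≤ y`) together with a labeling of the sites. -/
structure RState where
  x : ℤ
  y : ℤ
  lab : ℤ → Bool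

/-- The equilibration map `f_{r,s}`: run the rotor walk in `[x, y]` from `0` until it stops,
then extend the interval by `r` sites on the left if the walk stopped at `x − 1`, and by `s`
sites on the right if it stopped at `y + 1`, labeling the newly occupied sites `R`. -/
noncomputable def equil (r s : ℤ) (σ : RState) : RState :=
  let N := sInf {n | (walkStep^[n] (0, σ.lab)).1 ∉ Set.Icc σ.x σ.y}
  let c := walkStep^[N] (0, σ.lab)
  if c.1 < σ.x then
    ⟨σ.x - r, σ.y, fun t => if σ.x - r ≤ t ∧ t ≤ σ.x - 1 then true else c.2 t⟩
  else
    ⟨σ.x, σ.y + s, fun t => if σ.y + 1 ≤ t ∧ t ≤ σ.y + s then true else c.2 t⟩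

lemma sInf_exit_eq {σ : RState} {n : ℕ} {c : ℤ × (ℤ → Bool)}
    (heq : walkStep^[n] (0, σ.lab) = c) (hout : c.1 ∉ Set.Icc σ.x σ.y)
    (hpos : ∀ k, k < n → σ.x ≤ (walkStep^[k] (0, σ.lab)).1 ∧ (walkStep^[k] (0, σ.lab)).1 ≤ σ.y) :
    sInf {n | (walkStep^[n] (0, σ.lab)).1 ∉ Set.Icc σ.x σ.y} = n := by
  have hmem : n ∈ {n | (walkStep^[n] (0, σ.lab)).1 ∉ Set.Icc σ.x σ.y} := by
    simp only [Set.mem_setOf_eq, heq]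
    exact hout
  refine le_antisymm (Nat.sInf_le hmem) (le_of_not_gt fun hcon => ?_)
  have hmem2 := Nat.sInf_mem (⟨n, hmem⟩ : {n | (walkStep^[n] (0, σ.lab)).1 ∉ Set.Icc σ.x σ.y}.Nonempty)
  obtain ⟨h1, h2⟩ := hpos _ hcon
  exact hmem2 (Set.mem_Icc.2 ⟨h1, h2⟩)

lemma equil_spec (r s : ℤ) (hr : 0 < r) (hs : 0 < s) (σ : RState) (hx : σ.x ≤ 0) (hy : 0 ≤ σ.y) :
    (cardF σ.lab 0 σ.y ≤ cardT σ.lab σ.x (-1) →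
      (equil r s σ).x = σ.x ∧ (equil r s σ).y = σ.y + s ∧
      cardF (equil r s σ).lab 0 (equil r s σ).y = (σ.y + 1).toNat ∧
      cardT (equil r s σ).lab σ.x (-1) ≤ cardT σ.lab σ.x (-1)) ∧
    (cardT σ.lab σ.x (-1) < cardF σ.lab 0 σ.y →
      (equil r s σ).x = σ.x - r ∧ (equil r s σ).y = σ.y ∧
      cardT (equil r s σ).lab (σ.x - r) (-1) = (r - σ.x).toNat ∧
      cardF (equil r s σ).lab 0 σ.y ≤ cardF σ.lab 0 σ.y) := by
  have hm1 : (0:ℤ) - 1 = -1 := by norm_num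
  obtain ⟨hR, hL⟩ := runLemma (cardF σ.lab 0 σ.y) σ.x 0 σ.y σ.lab hx hy rfl
  rw [hm1] at hR hL
  constructor
  · intro hc
    obtain ⟨n, m, hxm, hm0, heq, hpos⟩ := hR hc
    have hN := sInf_exit_eq heq (by simp only [Set.mem_Icc]; omega) hpos
    have hev : equil r s σ = ⟨σ.x, σ.y + s,
        fun t => if σ.y + 1 ≤ t ∧ t ≤ σ.y + s then true
          else if m ≤ t ∧ t ≤ σ.y then false else σ.lab t⟩ := by
      rw [equil]
      simp only [hN, heq]
      rw [if_neg (by omega)]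
    rw [hev]
    dsimp only
    refine ⟨rfl, rfl, ?_, ?_⟩
    · unfold cardF
      have hfe : (Finset.Icc (0:ℤ) (σ.y + s)).filter
          (fun t => (if σ.y + 1 ≤ t ∧ t ≤ σ.y + s then true
            else if m ≤ t ∧ t ≤ σ.y then false else σ.lab t) = false)
          = Finset.Icc (0:ℤ) σ.y := by
        ext t
        simp only [Finset.mem_filter, Finset.mem_Icc]
        constructor
        · rintro ⟨⟨h1, h2⟩, hf⟩
          refine ⟨h1, ?_⟩
          by_contra hcon
          rw [if_pos (by omega)] at hf
          exact absurd hf (by simp)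
        · rintro ⟨h1, h2⟩
          refine ⟨⟨h1, by omega⟩, ?_⟩
          rw [if_neg (by omega), if_pos (by omega)]
      rw [hfe, Int.card_Icc]
      congr 1
      omega
    · unfold cardT
      apply Finset.card_le_card
      intro t ht
      simp only [Finset.mem_filter, Finset.mem_Icc] at ht ⊢
      obtain ⟨⟨h1, h2⟩, hf⟩ := ht
      rw [if_neg (by omega)] at hf
      refine ⟨⟨h1, h2⟩, ?_⟩
      by_cases hmt : m ≤ t
      · rw [if_pos (by omega)] at hf
        exact absurd hf (by simp)
      · rw [if_neg (by omega)] at hf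
        exact hf
  · intro hc
    obtain ⟨n, a, h0a, hay, ha, heq, hpos⟩ := hL hc
    have hN := sInf_exit_eq heq (by simp only [Set.mem_Icc]; omega) hpos
    have hev : equil r s σ = ⟨σ.x - r, σ.y,
        fun t => if σ.x - r ≤ t ∧ t ≤ σ.x - 1 then true
          else if σ.x ≤ t ∧ t ≤ a then true else σ.lab t⟩ := by
      rw [equil]
      simp only [hN, heq]
      rw [if_pos (by omega)]
    rw [hev]
    dsimp only
    refine ⟨rfl, rfl, ?_, ?_⟩
    · unfold cardT
      have hfe : (Finset.Icc (σ.x - r) (-1:ℤ)).filter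
          (fun t => (if σ.x - r ≤ t ∧ t ≤ σ.x - 1 then true
            else if σ.x ≤ t ∧ t ≤ a then true else σ.lab t) = true)
          = Finset.Icc (σ.x - r) (-1:ℤ) := by
        apply Finset.filter_true_of_mem
        intro t ht
        rw [Finset.mem_Icc] at ht
        by_cases h1 : t ≤ σ.x - 1
        · rw [if_pos (by omega)]
        · rw [if_neg (by omega), if_pos (by omega)]
      rw [hfe, Int.card_Icc]
      congr 1
      omega
    · unfold cardF
      apply Finset.card_le_card
      intro t ht
      simp only [Finset.mem_filter, Finset.mem_Icc] at ht ⊢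
      obtain ⟨⟨h1, h2⟩, hf⟩ := ht
      rw [if_neg (by omega)] at hf
      refine ⟨⟨h1, h2⟩, ?_⟩
      by_cases hta : σ.x ≤ t ∧ t ≤ a
      · rw [if_pos hta] at hf
        exact absurd hf (by simp)
      · rw [if_neg hta] at hf
        exact hf

lemma equil_basic (r s : ℤ) (hr : 0 < r) (hs : 0 < s) (σ : RState) (hx : σ.x ≤ 0) (hy : 0 ≤ σ.y) :
    (equil r s σ).x ≤ σ.x ∧ σ.y ≤ (equil r s σ).y ∧ (equil r s σ).x ≤ 0 ∧ 0 ≤ (equil r s σ).y := by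
  obtain ⟨hR, hL⟩ := equil_spec r s hr hs σ hx hy
  rcases le_or_gt (cardF σ.lab 0 σ.y) (cardT σ.lab σ.x (-1)) with h | h
  · obtain ⟨h1, h2, -, -⟩ := hR h
    omega
  · obtain ⟨h1, h2, -, -⟩ := hL h
    omega

lemma iter_basic (r s : ℤ) (hr : 0 < r) (hs : 0 < s) : ∀ (k : ℕ) (σ : RState), σ.x ≤ 0 → 0 ≤ σ.y →
    ((equil r s)^[k] σ).x ≤ σ.x ∧ σ.y ≤ ((equil r s)^[k] σ).y ∧
    ((equil r s)^[k] σ).x ≤ 0 ∧ 0 ≤ ((equil r s)^[k] σ).y := by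
  intro k
  induction k with
  | zero => intro σ hx hy; exact ⟨le_rfl, le_rfl, hx, hy⟩
  | succ k ih =>
    intro σ hx hy
    obtain ⟨h1, h2, h3, h4⟩ := ih σ hx hy
    rw [Function.iterate_succ_apply']
    obtain ⟨g1, g2, g3, g4⟩ := equil_basic r s hr hs _ h3 h4
    exact ⟨by omega, by omega, g3, g4⟩

lemma grow_left (r s : ℤ) (hr : 0 < r) (hs : 0 < s) (σ : RState) (hx : σ.x ≤ 0) (hy : 0 ≤ σ.y) :
    ∃ n : ℕ, ((equil r s)^[n] σ).x < σ.x := by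
  by_contra hcon
  push_neg at hcon
  have step : ∀ τ : RState, τ.x = σ.x → 0 ≤ τ.y → σ.x ≤ (equil r s τ).x →
      (equil r s τ).x = σ.x ∧ (equil r s τ).y = τ.y + s ∧
      cardF (equil r s τ).lab 0 (equil r s τ).y = (τ.y + 1).toNat ∧
      cardT (equil r s τ).lab σ.x (-1) ≤ cardT τ.lab σ.x (-1) := by
    intro τ hτx hτy hge
    obtain ⟨hR, hL⟩ := equil_spec r s hr hs τ (by omega) hτy
    rcases le_or_gt (cardF τ.lab 0 τ.y) (cardT τ.lab τ.x (-1)) with h | h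
    · obtain ⟨h1, h2, h3, h4⟩ := hR h
      rw [hτx] at h1 h4
      exact ⟨h1, h2, h3, h4⟩
    · obtain ⟨h1, -, -, -⟩ := hL h
      rw [h1, hτx] at hge
      omega
  have hit : ∀ n : ℕ, (equil r s)^[n+1] σ = equil r s ((equil r s)^[n] σ) :=
    fun n => Function.iterate_succ_apply' _ _ _
  have key : ∀ n : ℕ, ((equil r s)^[n] σ).x = σ.x ∧
      ((equil r s)^[n] σ).y = σ.y + n * s ∧
      cardT ((equil r s)^[n] σ).lab σ.x (-1) ≤ cardT σ.lab σ.x (-1) := by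
    intro n
    induction n with
    | zero => exact ⟨rfl, by simp, le_rfl⟩
    | succ n ih =>
      obtain ⟨h1, h2, h3⟩ := ih
      have hyn : 0 ≤ ((equil r s)^[n] σ).y := (iter_basic r s hr hs n σ hx hy).2.2.2
      have := step _ h1 hyn (by rw [← hit n]; exact hcon (n+1))
      rw [hit n]
      refine ⟨this.1, ?_, le_trans this.2.2.2 h3⟩
      rw [this.2.1, h2]
      push_cast
      ring
  set B₀ := cardT σ.lab σ.x (-1) with hB₀
  -- consider the step from state B₀ to B₀+1: it records the new cardF value
  obtain ⟨k1, k2, k3⟩ := key B₀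
  have hyB : 0 ≤ ((equil r s)^[B₀] σ).y := (iter_basic r s hr hs B₀ σ hx hy).2.2.2
  have s1 := step _ k1 hyB (by rw [← hit B₀]; exact hcon (B₀+1))
  obtain ⟨k1', k2', k3'⟩ := key (B₀+1)
  -- now examine the step at state B₀+1
  have hyB' : 0 ≤ ((equil r s)^[B₀+1] σ).y := (iter_basic r s hr hs (B₀+1) σ hx hy).2.2.2
  obtain ⟨hR, hL⟩ := equil_spec r s hr hs ((equil r s)^[B₀+1] σ) (by omega) hyB'
  have hA : cardF ((equil r s)^[B₀+1] σ).lab 0 ((equil r s)^[B₀+1] σ).y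
      = (((equil r s)^[B₀] σ).y + 1).toNat := by
    rw [hit B₀]
    exact s1.2.2.1
  have hylarge : (B₀ : ℤ) ≤ ((equil r s)^[B₀] σ).y := by
    rw [k2]
    have : (B₀:ℤ) * 1 ≤ (B₀:ℤ) * s := by
      apply mul_le_mul_of_nonneg_left (by omega) (by positivity)
    omega
  rcases le_or_gt (cardF ((equil r s)^[B₀+1] σ).lab 0 ((equil r s)^[B₀+1] σ).y)
      (cardT ((equil r s)^[B₀+1] σ).lab ((equil r s)^[B₀+1] σ).x (-1)) with h | h
  · rw [hA, k1'] at h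
    omega
  · obtain ⟨h1, -, -, -⟩ := hL h
    have := hcon (B₀+2)
    have h2 : (equil r s)^[B₀+2] σ = equil r s ((equil r s)^[B₀+1] σ) := hit (B₀+1)
    rw [h2, h1, k1'] at this
    omega

lemma grow_right (r s : ℤ) (hr : 0 < r) (hs : 0 < s) (σ : RState) (hx : σ.x ≤ 0) (hy : 0 ≤ σ.y) :
    ∃ n : ℕ, σ.y < ((equil r s)^[n] σ).y := by
  by_contra hcon
  push_neg at hcon
  have step : ∀ τ : RState, τ.y = σ.y → τ.x ≤ 0 → (equil r s τ).y ≤ σ.y →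
      (equil r s τ).y = σ.y ∧ (equil r s τ).x = τ.x - r ∧
      cardT (equil r s τ).lab (τ.x - r) (-1) = (r - τ.x).toNat ∧
      cardF (equil r s τ).lab 0 σ.y ≤ cardF τ.lab 0 σ.y := by
    intro τ hτy hτx hge
    obtain ⟨hR, hL⟩ := equil_spec r s hr hs τ hτx (by omega)
    rcases le_or_gt (cardF τ.lab 0 τ.y) (cardT τ.lab τ.x (-1)) with h | h
    · obtain ⟨-, h2, -, -⟩ := hR h
      rw [h2, hτy] at hge
      omega
    · obtain ⟨h1, h2, h3, h4⟩ := hL h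
      rw [hτy] at h2 h4
      exact ⟨h2, h1, h3, h4⟩
  have hit : ∀ n : ℕ, (equil r s)^[n+1] σ = equil r s ((equil r s)^[n] σ) :=
    fun n => Function.iterate_succ_apply' _ _ _
  have key : ∀ n : ℕ, ((equil r s)^[n] σ).y = σ.y ∧
      ((equil r s)^[n] σ).x = σ.x - n * r ∧
      cardF ((equil r s)^[n] σ).lab 0 σ.y ≤ cardF σ.lab 0 σ.y := by
    intro n
    induction n with
    | zero => exact ⟨rfl, by simp, le_rfl⟩
    | succ n ih =>
      obtain ⟨h1, h2, h3⟩ := ih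
      have hxn : ((equil r s)^[n] σ).x ≤ 0 := (iter_basic r s hr hs n σ hx hy).2.2.1
      have := step _ h1 hxn (by rw [← hit n]; exact hcon (n+1))
      rw [hit n]
      refine ⟨this.1, ?_, le_trans this.2.2.2 h3⟩
      rw [this.2.1, h2]
      push_cast
      ring
  set A₀ := cardF σ.lab 0 σ.y with hA₀
  obtain ⟨k1, k2, k3⟩ := key A₀
  have hxA : ((equil r s)^[A₀] σ).x ≤ 0 := (iter_basic r s hr hs A₀ σ hx hy).2.2.1
  have s1 := step _ k1 hxA (by rw [← hit A₀]; exact hcon (A₀+1))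
  obtain ⟨k1', k2', k3'⟩ := key (A₀+1)
  have hxA' : ((equil r s)^[A₀+1] σ).x ≤ 0 := (iter_basic r s hr hs (A₀+1) σ hx hy).2.2.1
  obtain ⟨hR, hL⟩ := equil_spec r s hr hs ((equil r s)^[A₀+1] σ) hxA' (by omega)
  have hB : cardT ((equil r s)^[A₀+1] σ).lab (((equil r s)^[A₀] σ).x - r) (-1)
      = (r - ((equil r s)^[A₀] σ).x).toNat := by
    rw [hit A₀]
    exact s1.2.2.1
  have hxsmall : ((equil r s)^[A₀] σ).x ≤ σ.x - (A₀:ℤ) := by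
    rw [k2]
    have : (A₀:ℤ) * 1 ≤ (A₀:ℤ) * r := by
      apply mul_le_mul_of_nonneg_left (by omega) (by positivity)
    omega
  rcases le_or_gt (cardF ((equil r s)^[A₀+1] σ).lab 0 ((equil r s)^[A₀+1] σ).y)
      (cardT ((equil r s)^[A₀+1] σ).lab ((equil r s)^[A₀+1] σ).x (-1)) with h | h
  · obtain ⟨-, h2, -, -⟩ := hR h
    have := hcon (A₀+2)
    have h3 : (equil r s)^[A₀+2] σ = equil r s ((equil r s)^[A₀+1] σ) := hit (A₀+1)
    rw [h3, h2, k1'] at this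
    omega
  · -- B < A at state A₀+1: impossible since B is large and A is small
    rw [k1'] at h
    have hx2 : ((equil r s)^[A₀+1] σ).x = ((equil r s)^[A₀] σ).x - r := by
      rw [hit A₀]
      exact s1.2.1
    rw [hx2, hB] at h
    omega

/-- For every state with interval `[x, y]` there is an `N` such that after `N` applications
of `f_{r,s}` the interval `[x′, y′]` satisfies `x′ < x` and `y′ > y`. -/
theorem interval_grows_both_ways (r s : ℤ) (hr : 0 < r) (hs : 0 < s)
    (σ : RState) (hx : σ.x ≤ 0) (hy : 0 ≤ σ.y) :
    ∃ N : ℕ, ((equil r s)^[N] σ).x < σ.x ∧ σ.y < ((equil r s)^[N] σ).y := by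
  obtain ⟨N₁, hN₁⟩ := grow_left r s hr hs σ hx hy
  obtain ⟨N₂, hN₂⟩ := grow_right r s hr hs σ hx hy
  refine ⟨max N₁ N₂, ?_, ?_⟩
  · have h1 : (equil r s)^[max N₁ N₂] σ = (equil r s)^[max N₁ N₂ - N₁] ((equil r s)^[N₁] σ) := by
      rw [← Function.iterate_add_apply]
      congr 1
      omega
    obtain ⟨v1, v2, v3, v4⟩ := iter_basic r s hr hs N₁ σ hx hy
    have := (iter_basic r s hr hs (max N₁ N₂ - N₁) ((equil r s)^[N₁] σ) v3 v4).1
    rw [h1]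
    omega
  · have h1 : (equil r s)^[max N₁ N₂] σ = (equil r s)^[max N₁ N₂ - N₂] ((equil r s)^[N₂] σ) := by
      rw [← Function.iterate_add_apply]
      congr 1
      omega
    obtain ⟨v1, v2, v3, v4⟩ := iter_basic r s hr hs N₂ σ hx hy
    have := (iter_basic r s hr hs (max N₁ N₂ - N₂) ((equil r s)^[N₂] σ) v3 v4).2.1
    rw [h1]
    omega
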